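/- arXiv:0711.3338 — 2 statements merged into one kernel-verified Lean document; each statement's English description precedes it below -/
import Mathlib

section
/- For any two nonempty strings $a, b$ over a finite alphabet and any $k \ge 0$, $|a| \cdot H_k(a) + |b| \cdot H_k(b) \le |ab| \cdot H_k(ab)$. -/
/-- 0th-order empirical entropy of a string `s` over a finite alphabet. -/
noncomputable def H0 {α : Type*} [Fintype α] [DecidableEq α] (s : List α) : ℝ :=
  (s.length : ℝ)⁻¹ *
    ∑ a : α, (s.count a : ℝ) * Real.log ((s.length : ℝ) / (s.count a : ℝ))

/-- `follow w s` is the concatenation, in left-to-right order, of the characters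
that immediately follow occurrences of `w` in `s`. -/
def follow {α : Type*} [DecidableEq α] (w s : List α) : List α :=
  (List.range s.length).filterMap fun i =>
    if (s.drop i).take w.length = w then (s.drop (i + w.length)).head? else none

/-- `k`th-order empirical entropy: `H_k(s) = (1/|s|) ∑_{|w|=k} |w_s| H₀(w_s)`. -/
noncomputable def Hk {α : Type*} [Fintype α] [DecidableEq α] (k : ℕ) (s : List α) : ℝ :=
  (s.length : ℝ)⁻¹ *
    ∑ w : Fin k → α,
      ((follow (List.ofFn w) s).length : ℝ) * H0 (follow (List.ofFn w) s)

/- ### Auxiliary analytic lemmas -/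

private lemma term_ineq (x y s t : ℝ) (hx : 0 ≤ x) (hy : 0 ≤ y) (hxs : x ≤ s) (hyt : y ≤ t) :
    x * Real.log (s / x) + y * Real.log (t / y) ≤ (x + y) * Real.log ((s + t) / (x + y)) := by
  rcases eq_or_lt_of_le hx with hx0 | hx0
  · rcases eq_or_lt_of_le hy with hy0 | hy0
    · simp [← hx0, ← hy0]
    · have ht : (0:ℝ) < t := lt_of_lt_of_le hy0 hyt
      have hs : (0:ℝ) ≤ s := le_trans hx hxs
      simp only [← hx0, zero_mul, zero_add]
      exact mul_le_mul_of_nonneg_left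
        (Real.log_le_log (div_pos ht hy0) (by gcongr; linarith)) hy0.le
  · rcases eq_or_lt_of_le hy with hy0 | hy0
    · have hs : (0:ℝ) < s := lt_of_lt_of_le hx0 hxs
      have ht : (0:ℝ) ≤ t := le_trans hy hyt
      simp only [← hy0, zero_mul, add_zero]
      exact mul_le_mul_of_nonneg_left
        (Real.log_le_log (div_pos hs hx0) (by gcongr; linarith)) hx0.le
    · have hs : (0:ℝ) < s := lt_of_lt_of_le hx0 hxs
      have ht : (0:ℝ) < t := lt_of_lt_of_le hy0 hyt
      have hxy : (0:ℝ) < x + y := by linarith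
      have hu : (0:ℝ) < (s + t) / (x + y) := by positivity
      set u : ℝ := (s + t) / (x + y) with hudef
      have key : ∀ p q : ℝ, 0 < p → 0 < q →
          p * Real.log (q / p) ≤ p * Real.log u + q / u - p := by
        intro p q hp hq
        have h1 : q / p = u * (q / (p * u)) := by field_simp
        have h2 : Real.log (q / (p * u)) ≤ q / (p * u) - 1 :=
          Real.log_le_sub_one_of_pos (by positivity)
        have h3 : p * (q / (p * u)) = q / u := by field_simp
        calc p * Real.log (q / p) = p * (Real.log u + Real.log (q / (p * u))) := by
              rw [h1, Real.log_mul (ne_of_gt hu) (by positivity)]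
          _ ≤ p * (Real.log u + (q / (p * u) - 1)) := by
              exact mul_le_mul_of_nonneg_left (by linarith) hp.le
          _ = p * Real.log u + p * (q / (p * u)) - p := by ring
          _ = p * Real.log u + q / u - p := by rw [h3]
      have hsum : (s + t) / u = x + y := by
        rw [hudef]; field_simp
      calc x * Real.log (s / x) + y * Real.log (t / y)
          ≤ (x * Real.log u + s / u - x) + (y * Real.log u + t / u - y) :=
            add_le_add (key x s hx0 hs) (key y t hy0 ht)
        _ = (x + y) * Real.log u + (s + t) / u - (x + y) := by ring
        _ = (x + y) * Real.log u := by rw [hsum]; ring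

private noncomputable def Fent {α : Type*} [Fintype α] (v : α → ℝ) : ℝ :=
  ∑ c : α, v c * Real.log ((∑ d : α, v d) / v c)

private lemma Fent_nonneg {α : Type*} [Fintype α] (f : α → ℝ) (hf : ∀ c, 0 ≤ f c) :
    0 ≤ Fent f := by
  refine Finset.sum_nonneg fun c _ => ?_
  rcases eq_or_lt_of_le (hf c) with h | h
  · simp [← h]
  · refine mul_nonneg h.le (Real.log_nonneg ?_)
    rw [le_div_iff₀ h, one_mul]
    exact Finset.single_le_sum (fun i _ => hf i) (Finset.mem_univ c)

private lemma Fent_superadd {α : Type*} [Fintype α] (f g : α → ℝ)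
    (hf : ∀ c, 0 ≤ f c) (hg : ∀ c, 0 ≤ g c) :
    Fent f + Fent g ≤ Fent (f + g) := by
  unfold Fent
  rw [← Finset.sum_add_distrib]
  have hsum : ∑ d : α, (f + g) d = (∑ d : α, f d) + ∑ d : α, g d := by
    simp [Finset.sum_add_distrib]
  rw [hsum]
  refine Finset.sum_le_sum fun c _ => ?_
  exact term_ineq _ _ _ _ (hf c) (hg c)
    (Finset.single_le_sum (fun i _ => hf i) (Finset.mem_univ c))
    (Finset.single_le_sum (fun i _ => hg i) (Finset.mem_univ c))

/- ### Counting lemmas -/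

private lemma count_filterMap {α β : Type*} [DecidableEq β] (c : β) (f : α → Option β)
    (l : List α) : (l.filterMap f).count c = l.countP fun x => f x = some c := by
  induction l with
  | nil => rfl
  | cons a l ih =>
    rw [List.filterMap_cons, List.countP_cons]
    cases h : f a with
    | none => simp [h, ih]
    | some b =>
      rw [List.count_cons, ih]
      by_cases hbc : b = c <;> simp [h, hbc]

private lemma length_eq_sum_count {α : Type*} [Fintype α] [DecidableEq α] (l : List α) :
    l.length = ∑ c : α, l.count c := by
  simpa using (Multiset.sum_count_eq_card (s := Finset.univ) (m := (l : Multiset α))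
    (fun a _ => Finset.mem_univ a)).symm

private lemma count_follow_append {α : Type*} [DecidableEq α] (w a b : List α) (c : α) :
    (follow w a).count c + (follow w b).count c ≤ (follow w (a ++ b)).count c := by
  unfold follow
  rw [count_filterMap, count_filterMap, count_filterMap, List.length_append, List.range_add,
    List.countP_append, List.countP_map]
  refine add_le_add ?_ ?_
  · refine List.countP_mono_left fun i hi => ?_
    simp only [List.mem_range] at hi
    simp only [decide_eq_true_eq]
    intro h
    split_ifs at h with hP
    · have hlen : w.length ≤ (a.drop i).length := by
        have hl := congrArg List.length hP
        rw [List.length_take] at hl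
        exact min_eq_right_iff.mp (by omega)
      have hdrop : (a ++ b).drop i = a.drop i ++ b := by
        rw [List.drop_append, Nat.sub_eq_zero_of_le hi.le, List.drop_zero]
      have hQ : ((a ++ b).drop i).take w.length = w := by
        rw [hdrop, List.take_append, Nat.sub_eq_zero_of_le hlen,
          List.take_zero, List.append_nil, hP]
      rw [if_pos hQ]
      rw [List.drop_append, List.head?_append, h]
      rfl
  · refine List.countP_mono_left fun j hj => ?_
    simp only [List.mem_range] at hj
    simp only [Function.comp, decide_eq_true_eq]
    intro h
    have e1 : ∀ n, (a ++ b).drop (a.length + n) = b.drop n := by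
      intro n
      rw [List.drop_append, List.drop_eq_nil_of_le (by omega),
        Nat.add_sub_cancel_left, List.nil_append]
    split_ifs at h with hP
    rw [if_pos (by rw [e1]; exact hP), Nat.add_assoc, e1]
    exact h

/- ### Putting things together -/

private lemma mul_H0_eq {α : Type*} [Fintype α] [DecidableEq α] (s : List α) :
    (s.length : ℝ) * H0 s = Fent (fun c => (s.count c : ℝ)) := by
  have cast_len : (s.length : ℝ) = ∑ c : α, (s.count c : ℝ) := by
    rw [length_eq_sum_count]; push_cast; rfl
  rcases eq_or_ne s.length 0 with h | h
  · have hs : s = [] := List.length_eq_zero_iff.mp h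
    subst hs
    simp [H0, Fent]
  · rw [H0, ← mul_assoc, mul_inv_cancel₀ (by exact_mod_cast h), one_mul, Fent]
    rw [cast_len]

private lemma L_le {α : Type*} [Fintype α] [DecidableEq α] (x y z : List α)
    (h : ∀ c, x.count c + y.count c ≤ z.count c) :
    (x.length : ℝ) * H0 x + (y.length : ℝ) * H0 y ≤ (z.length : ℝ) * H0 z := by
  rw [mul_H0_eq, mul_H0_eq, mul_H0_eq]
  set fx : α → ℝ := fun c => (x.count c : ℝ) with hfxd
  set fy : α → ℝ := fun c => (y.count c : ℝ) with hfyd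
  set e : α → ℝ := fun c => (z.count c : ℝ) - fx c - fy c with hed
  have hfx : ∀ c, 0 ≤ fx c := fun c => Nat.cast_nonneg _
  have hfy : ∀ c, 0 ≤ fy c := fun c => Nat.cast_nonneg _
  have he : ∀ c, 0 ≤ e c := by
    intro c
    have := h c
    simp only [hed, hfxd, hfyd]
    have : (x.count c : ℝ) + (y.count c : ℝ) ≤ (z.count c : ℝ) := by exact_mod_cast h c
    linarith
  have hze : (fun c => ((z.count c : ℕ) : ℝ)) = (fx + fy) + e := by
    funext c; simp [hed]
  calc Fent fx + Fent fy ≤ Fent (fx + fy) := Fent_superadd fx fy hfx hfy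
    _ ≤ Fent (fx + fy) + Fent e := le_add_of_nonneg_right (Fent_nonneg e he)
    _ ≤ Fent ((fx + fy) + e) :=
        Fent_superadd _ _ (fun c => add_nonneg (hfx c) (hfy c)) he
    _ = Fent (fun c => ((z.count c : ℕ) : ℝ)) := by rw [hze]

/-- Length times `k`th-order empirical entropy is superadditive. -/
theorem Hk_superadditive {α : Type*} [Fintype α] [DecidableEq α]
    (k : ℕ) (a b : List α) (ha : a ≠ []) (hb : b ≠ []) :
    (a.length : ℝ) * Hk k a + (b.length : ℝ) * Hk k b ≤
      ((a ++ b).length : ℝ) * Hk k (a ++ b) := by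
  have hma : (a.length : ℝ) ≠ 0 := by
    simpa using List.length_pos_iff.mpr ha |>.ne'
  have hmb : (b.length : ℝ) ≠ 0 := by
    simpa using List.length_pos_iff.mpr hb |>.ne'
  have hmab : ((a ++ b).length : ℝ) ≠ 0 := by
    simp only [List.length_append]
    intro hcontra
    have : a.length + b.length = 0 := by exact_mod_cast hcontra
    have := List.length_pos_iff.mpr ha
    omega
  rw [Hk, Hk, Hk, ← mul_assoc, ← mul_assoc, ← mul_assoc,
    mul_inv_cancel₀ hma, mul_inv_cancel₀ hmb, mul_inv_cancel₀ hmab,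
    one_mul, one_mul, one_mul, ← Finset.sum_add_distrib]
  refine Finset.sum_le_sum fun w _ => ?_
  exact L_le _ _ _ (count_follow_append (List.ofFn w) a b)
end

section
/- Let $d$ be a string of length $\sigma^k$ over an alphabet of size $\sigma$ such that, reading $d$ cyclically, every string of length $k$ over the alphabet occurs exactly once among the $\sigma^k$ cyclic windows of length $k$. Then for every $i \ge 1$, every length-$k$ substring of the $i$-fold concatenation $d^i$ is followed by a uniquely determined character, and consequently $H_k(d^i) = 0$. -/
/-- The cyclic window of length `k` of `d` starting at position `j`
(indices taken modulo `d.length`). -/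
def cycWin {α : Type*} [Inhabited α] (d : List α) (k j : ℕ) : List α :=
  List.ofFn fun t : Fin k => d.getD ((j + t.val) % d.length) default

lemma H0_eq_zero_of_const {α : Type*} [Fintype α] [DecidableEq α] (t : List α)
    (h : ∀ a ∈ t, ∀ b ∈ t, a = b) : H0 t = 0 := by
  unfold H0
  rw [Finset.sum_eq_zero, mul_zero]
  intro a _
  rcases Nat.eq_zero_or_pos (t.count a) with h0 | h0
  · simp [h0]
  · have ha : a ∈ t := List.count_pos_iff.mp h0
    have hc : t.count a = t.length :=
      List.count_eq_length.mpr (fun b hb => (h b hb a ha).symm)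
    have hl : (t.length : ℝ) ≠ 0 := by
      have : 0 < t.length := hc ▸ h0
      exact_mod_cast this.ne'
    rw [hc, div_self hl, Real.log_one, mul_zero]

lemma flatten_replicate_getElem? {α : Type*} (d : List α) :
    ∀ (i j : ℕ), j < i * d.length →
      ((List.replicate i d).flatten)[j]? = d[j % d.length]? := by
  intro i
  induction i with
  | zero => intro j hj; omega
  | succ n ih =>
      intro j hj
      rw [List.replicate_succ, List.flatten_cons]
      rw [Nat.succ_mul] at hj
      rcases lt_or_ge j d.length with h | h
      · rw [List.getElem?_append, if_pos h, Nat.mod_eq_of_lt h]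
      · rw [List.getElem?_append, if_neg (not_lt.mpr h),
          ih (j - d.length) (by omega), Nat.mod_eq_sub_mod h]

/-- If `d` has length `σ^k` and, read cyclically, every length-`k` string occurs
exactly once among its cyclic windows, then in every power `d^i` each length-`k`
substring is followed by a uniquely determined character, and `H_k(d^i) = 0`. -/
theorem deBruijn_power_Hk_eq_zero {α : Type*} [Fintype α] [DecidableEq α] [Inhabited α]
    (k : ℕ) (hk : 1 ≤ k) (d : List α) (hlen : d.length = Fintype.card α ^ k)
    (hdb : ∀ w : Fin k → α, ∃! j : Fin d.length, cycWin d k j.val = List.ofFn w)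
    (i : ℕ) (hi : 1 ≤ i) :
    (∀ p q : ℕ, p + k < ((List.replicate i d).flatten).length →
        q + k < ((List.replicate i d).flatten).length →
        (((List.replicate i d).flatten).drop p).take k =
          (((List.replicate i d).flatten).drop q).take k →
        ((List.replicate i d).flatten)[p + k]? =
          ((List.replicate i d).flatten)[q + k]?) ∧
      Hk k ((List.replicate i d).flatten) = 0 := by
  set s := (List.replicate i d).flatten with hs
  set L := d.length with hLdef
  have hL : 0 < L := by
    rw [hlen]
    exact pow_pos Fintype.card_pos k
  have hslen : s.length = i * L := by simp [hs, mul_comm]; exact Or.inl rfl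
  -- substring lemma
  have hget : ∀ j : ℕ, j < s.length → s[j]? = d[j % L]? := by
    intro j hj
    exact flatten_replicate_getElem? d i j (hslen ▸ hj)
  have hsub : ∀ p : ℕ, p + k ≤ s.length →
      (s.drop p).take k = cycWin d k (p % L) := by
    intro p hp
    apply List.ext_getElem
    · simp [cycWin]
      omega
    · intro n h1 h2
      have hn : n < k := by simpa [cycWin] using h2
      have hpn : p + n < s.length := by omega
      have h3 : (p + n) % L < L := Nat.mod_lt _ hL
      have e1 : s[p + n]? = d[(p + n) % L]? := hget _ hpn
      rw [List.getElem_take, List.getElem_drop]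
      rw [show (cycWin d k (p % L))[n] = d.getD ((p % L + n) % L) default by
        simp [cycWin, List.getElem_ofFn]; rw [← hLdef, Nat.mod_add_mod]]
      have hmod : (p % L + n) % L = (p + n) % L :=
        Nat.ModEq.add_right n (Nat.mod_modEq p L)
      rw [hmod, List.getD_eq_getElem d default h3]
      have e2 : s[p + n]? = some s[p + n] := List.getElem?_eq_getElem hpn
      have e3 : d[(p + n) % L]? = some d[(p + n) % L] := List.getElem?_eq_getElem h3
      rw [e2, e3] at e1
      exact Option.some.inj e1
  -- uniqueness of followers
  have huniq : ∀ p q : ℕ, p + k < s.length → q + k < s.length →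
      (s.drop p).take k = (s.drop q).take k →
      s[p + k]? = s[q + k]? := by
    intro p q hp hq heq
    have hcw : cycWin d k (p % L) = cycWin d k (q % L) := by
      rw [← hsub p hp.le, ← hsub q hq.le, heq]
    set w : Fin k → α := fun t => d.getD ((p % L + t.val) % L) default with hw
    have h1 : cycWin d k (p % L) = List.ofFn w := rfl
    have h2 : cycWin d k (q % L) = List.ofFn w := by rw [← hcw]; exact h1
    obtain ⟨j, _, hju⟩ := hdb w
    have e1 : (⟨p % L, Nat.mod_lt _ hL⟩ : Fin d.length) = j := hju _ h1
    have e2 : (⟨q % L, Nat.mod_lt _ hL⟩ : Fin d.length) = j := hju _ h2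
    have hpq : p % L = q % L := by
      have := e1.trans e2.symm
      simpa using congrArg Fin.val this
    have hmod : (p + k) % L = (q + k) % L := by
      have : p ≡ q [MOD L] := hpq
      exact this.add_right k
    rw [hget _ hp, hget _ hq, hmod]
  refine ⟨huniq, ?_⟩
  -- Hk = 0
  unfold Hk
  rw [Finset.sum_eq_zero, mul_zero]
  intro w _
  rw [H0_eq_zero_of_const, mul_zero]
  intro a ha b hb
  simp only [follow, List.mem_filterMap, List.mem_range, List.length_ofFn] at ha hb
  obtain ⟨p, hp, hpa⟩ := ha
  obtain ⟨q, hq, hqb⟩ := hb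
  rw [List.head?_drop] at hpa hqb
  have hcp : (s.drop p).take k = List.ofFn w := by
    by_contra hc; rw [if_neg hc] at hpa; exact absurd hpa (by simp)
  have hcq : (s.drop q).take k = List.ofFn w := by
    by_contra hc; rw [if_neg hc] at hqb; exact absurd hqb (by simp)
  rw [if_pos hcp] at hpa
  rw [if_pos hcq] at hqb
  obtain ⟨hplt, -⟩ := List.getElem?_eq_some_iff.mp hpa
  obtain ⟨hqlt, -⟩ := List.getElem?_eq_some_iff.mp hqb
  have := huniq p q hplt hqlt (hcp.trans hcq.symm)
  rw [hpa, hqb] at this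
  exact Option.some.inj this
end
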